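/- The premium M_Ind(Λ, L) = Λ·E[Θ | Λ, L] with Λ independent of Θ and E[Θ] = 1 has zero fairness index: Var(E[M_Ind(Λ,L)/Λ | Λ]) = 0. -/

import Mathlib

open MeasureTheory ProbabilityTheory

/-- The individualized premium `M_Ind(Λ, L) = Λ·E[Θ | Λ, L]` has zero fairness index:
`Var(E[M_Ind(Λ,L)/Λ | Λ]) = 0`, when `Λ ⟂ Θ` and `E[Θ] = 1`. -/
theorem poi_premium_zero_fix
    {Ω : Type*} [m0 : MeasurableSpace Ω] (μ : Measure Ω) [IsProbabilityMeasure μ]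
    (Λ Θ : Ω → ℝ) {z : ℕ} (L : Ω → Fin z)
    (hΛ : Measurable Λ) (hΘ : Measurable Θ) (hL : Measurable L)
    (hfin : (Set.range Λ).Finite) (hΛpos : ∀ ω, 0 < Λ ω)
    (hΘnonneg : ∀ ω, 0 ≤ Θ ω) (hΘ2 : MemLp Θ 2 μ)
    (hΘmean : ∫ ω, Θ ω ∂μ = 1)
    (hindep : IndepFun Λ Θ μ)
    (γInd : ℝ → Fin z → ℝ)
    (hγInd : ∀ (l : ℝ) (ℓ : Fin z), γInd l ℓ =
        ∫ ω, Θ ω ∂(μ[|Λ ⁻¹' {l} ∩ L ⁻¹' {ℓ}])) :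
    variance (μ[fun ω => (Λ ω * γInd (Λ ω) (L ω)) / Λ ω
        | MeasurableSpace.comap Λ inferInstance]) μ = 0 := by
  classical
  have hΘint : Integrable Θ μ := hΘ2.integrable (by norm_num)
  set f : Ω → ℝ := fun ω => γInd (Λ ω) (L ω) with hfdef
  have hfeq : (fun ω => (Λ ω * γInd (Λ ω) (L ω)) / Λ ω) = f := by
    funext ω
    have : Λ ω ≠ 0 := (hΛpos ω).ne'
    field_simp [hfdef]
    rfl
  rw [hfeq]
  have hm : MeasurableSpace.comap Λ inferInstance ≤ m0 := hΛ.comap_le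
  haveI : SigmaFinite (μ.trim hm) := by
    haveI : IsFiniteMeasure (μ.trim hm) := isFiniteMeasure_trim hm
    infer_instance
  set T : Finset ℝ := hfin.toFinset with hTdef
  set A : ℝ → Fin z → Set Ω := fun l ℓ => Λ ⁻¹' {l} ∩ L ⁻¹' {ℓ} with hAdef
  have hAmeas : ∀ l ℓ, MeasurableSet (A l ℓ) := fun l ℓ =>
    (hΛ (measurableSet_singleton l)).inter (hL (measurableSet_singleton ℓ))
  have hΛlmeas : ∀ l : ℝ, MeasurableSet (Λ ⁻¹' {l}) := fun l =>
    hΛ (measurableSet_singleton l)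
  -- f as a finite sum of indicators
  have hF : ∀ ω, f ω = ∑ l ∈ T, ∑ ℓ : Fin z,
      (A l ℓ).indicator (fun _ => γInd l ℓ) ω := by
    intro ω
    have hmem : Λ ω ∈ T := hfin.mem_toFinset.2 (Set.mem_range_self ω)
    rw [Finset.sum_eq_single (Λ ω)]
    · rw [Fintype.sum_eq_single (L ω)]
      · rw [Set.indicator_of_mem (show ω ∈ A (Λ ω) (L ω) from ⟨rfl, rfl⟩)]
      · intro ℓ hℓ
        apply Set.indicator_of_notMem
        rintro ⟨-, h2⟩
        exact hℓ (show L ω = ℓ from h2).symm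
    · intro l _ hl
      apply Finset.sum_eq_zero
      intro ℓ _
      apply Set.indicator_of_notMem
      rintro ⟨h1, -⟩
      exact hl (show Λ ω = l from h1).symm
    · intro h
      exact absurd hmem h
  have hf_int : Integrable f μ := by
    have : Integrable (fun ω => ∑ l ∈ T, ∑ ℓ : Fin z,
        (A l ℓ).indicator (fun _ => γInd l ℓ) ω) μ := by
      apply integrable_finset_sum
      intro l _
      apply integrable_finset_sum
      intro ℓ _
      exact (integrable_const _).indicator (hAmeas l ℓ)
    exact this.congr (Filter.Eventually.of_forall fun ω => (hF ω).symm)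
  -- single-cell computation
  have hcell : ∀ l ℓ, γInd l ℓ * (μ (A l ℓ)).toReal = ∫ x in A l ℓ, Θ x ∂μ := by
    intro l ℓ
    by_cases h0 : μ (A l ℓ) = 0
    · rw [h0, ENNReal.toReal_zero, mul_zero, Measure.restrict_eq_zero.2 h0,
        integral_zero_measure]
    · have hfin' : μ (A l ℓ) ≠ ⊤ := measure_ne_top μ _
      rw [hγInd l ℓ]
      show (∫ ω, Θ ω ∂((μ (A l ℓ))⁻¹ • μ.restrict (A l ℓ))) * (μ (A l ℓ)).toReal
          = ∫ x in A l ℓ, Θ x ∂μ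
      rw [integral_smul_measure, smul_eq_mul, ENNReal.toReal_inv]
      field_simp [ENNReal.toReal_ne_zero, h0, hfin']
  -- summing cells over ℓ
  have hrow : ∀ l : ℝ, ∑ ℓ : Fin z, ∫ x in A l ℓ, Θ x ∂μ
      = ∫ x in Λ ⁻¹' {l}, Θ x ∂μ := by
    intro l
    have hdecomp : ∀ x, Θ x = ∑ ℓ : Fin z, (L ⁻¹' {ℓ}).indicator Θ x := by
      intro x
      rw [Fintype.sum_eq_single (L x)]
      · simp
      · intro ℓ hℓ
        refine Set.indicator_of_notMem ?_ _
        intro h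
        exact hℓ (Set.mem_singleton_iff.mp h).symm
    calc ∑ ℓ : Fin z, ∫ x in A l ℓ, Θ x ∂μ
        = ∑ ℓ : Fin z, ∫ x in Λ ⁻¹' {l}, (L ⁻¹' {ℓ}).indicator Θ x ∂μ := by
          refine Finset.sum_congr rfl fun ℓ _ => ?_
          rw [setIntegral_indicator (hL (measurableSet_singleton ℓ))]
      _ = ∫ x in Λ ⁻¹' {l}, ∑ ℓ : Fin z, (L ⁻¹' {ℓ}).indicator Θ x ∂μ := by
          rw [integral_finset_sum]
          intro ℓ _
          exact (hΘint.indicator (hL (measurableSet_singleton ℓ))).integrableOn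
      _ = ∫ x in Λ ⁻¹' {l}, Θ x ∂μ := by
          refine integral_congr_ae (Filter.Eventually.of_forall fun x => ?_)
          exact (hdecomp x).symm
  -- independence
  have hatom : ∀ l : ℝ, ∫ x in Λ ⁻¹' {l}, Θ x ∂μ = (μ (Λ ⁻¹' {l})).toReal := by
    intro l
    set X : Ω → ℝ := fun ω => ({l} : Set ℝ).indicator (fun _ => (1:ℝ)) (Λ ω) with hXdef
    have hXmeas : Measurable X :=
      (measurable_const.indicator (measurableSet_singleton l)).comp hΛ
    have hXΘ : IndepFun X Θ μ :=
      hindep.comp (measurable_const.indicator (measurableSet_singleton l)) measurable_id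
    have h1 : ∫ ω, X ω * Θ ω ∂μ = (∫ ω, X ω ∂μ) * ∫ ω, Θ ω ∂μ :=
      hXΘ.integral_mul_eq_mul_integral hXmeas.aestronglyMeasurable hΘ.aestronglyMeasurable
    have h2 : (fun ω => X ω * Θ ω) = (Λ ⁻¹' {l}).indicator Θ := by
      funext ω
      simp only [hXdef, Set.indicator_apply, Set.mem_preimage]
      by_cases h : Λ ω ∈ ({l} : Set ℝ) <;> simp [h]
    have h3 : ∫ ω, X ω ∂μ = (μ (Λ ⁻¹' {l})).toReal := by
      have hX' : X = (Λ ⁻¹' {l}).indicator (fun _ => (1:ℝ)) := by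
        funext ω
        simp only [hXdef, Set.indicator_apply, Set.mem_preimage]
      rw [hX', integral_indicator_const _ (hΛlmeas l), smul_eq_mul, mul_one, measureReal_def]
    rw [← integral_indicator (hΛlmeas l), ← h2, h1, h3, hΘmean, mul_one]
  have key : ∀ l : ℝ, ∑ ℓ : Fin z, γInd l ℓ * (μ (A l ℓ)).toReal
      = (μ (Λ ⁻¹' {l})).toReal := by
    intro l
    calc ∑ ℓ : Fin z, γInd l ℓ * (μ (A l ℓ)).toReal
        = ∑ ℓ : Fin z, ∫ x in A l ℓ, Θ x ∂μ :=
          Finset.sum_congr rfl fun ℓ _ => hcell l ℓ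
      _ = ∫ x in Λ ⁻¹' {l}, Θ x ∂μ := hrow l
      _ = (μ (Λ ⁻¹' {l})).toReal := hatom l
  -- the constant 1 is the conditional expectation of f given σ(Λ)
  have hone : (fun _ : Ω => (1:ℝ)) =ᵐ[μ]
      μ[f|MeasurableSpace.comap Λ inferInstance] := by
    refine ae_eq_condExp_of_forall_setIntegral_eq hm hf_int
      (fun s _ _ => integrableOn_const (measure_ne_top μ s))
      (fun s hs _ => ?_)
      (stronglyMeasurable_const.aestronglyMeasurable)
    obtain ⟨t, ht, rfl⟩ := hs
    have hlhs : ∫ _ in Λ ⁻¹' t, (1:ℝ) ∂μ = (μ (Λ ⁻¹' t)).toReal := by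
      rw [setIntegral_const, smul_eq_mul, mul_one, measureReal_def]
    rw [hlhs]
    have hrhs : ∫ x in Λ ⁻¹' t, f x ∂μ
        = ∑ l ∈ T, ∑ ℓ : Fin z, γInd l ℓ * (μ (A l ℓ ∩ Λ ⁻¹' t)).toReal := by
      calc ∫ x in Λ ⁻¹' t, f x ∂μ
          = ∫ x in Λ ⁻¹' t, (∑ l ∈ T, ∑ ℓ : Fin z,
              (A l ℓ).indicator (fun _ => γInd l ℓ) x) ∂μ :=
            integral_congr_ae (Filter.Eventually.of_forall fun x => hF x)
        _ = ∑ l ∈ T, ∑ ℓ : Fin z, ∫ x in Λ ⁻¹' t,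
              (A l ℓ).indicator (fun _ => γInd l ℓ) x ∂μ := by
            rw [integral_finset_sum]
            · refine Finset.sum_congr rfl fun l _ => ?_
              rw [integral_finset_sum]
              intro ℓ _
              exact ((integrable_const _).indicator (hAmeas l ℓ)).integrableOn
            · intro l _
              apply integrable_finset_sum
              intro ℓ _
              exact ((integrable_const _).indicator (hAmeas l ℓ)).integrableOn
        _ = ∑ l ∈ T, ∑ ℓ : Fin z, γInd l ℓ * (μ (A l ℓ ∩ Λ ⁻¹' t)).toReal := by
            refine Finset.sum_congr rfl fun l _ => Finset.sum_congr rfl fun ℓ _ => ?_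
            rw [integral_indicator_const _ (hAmeas l ℓ),
              measureReal_def, Measure.restrict_apply (hAmeas l ℓ), smul_eq_mul, mul_comm]
    rw [hrhs]
    -- decompose μ (Λ ⁻¹' t)
    have hone' : ∀ x : Ω, (1:ℝ) = ∑ l ∈ T,
        (Λ ⁻¹' {l}).indicator (fun _ => (1:ℝ)) x := by
      intro x
      have hmem : Λ x ∈ T := hfin.mem_toFinset.2 (Set.mem_range_self x)
      rw [Finset.sum_eq_single (Λ x)]
      · simp
      · intro l _ hl
        refine Set.indicator_of_notMem ?_ _
        intro h
        exact hl (Set.mem_singleton_iff.mp h).symm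
      · intro h; exact absurd hmem h
    have hmeast : (μ (Λ ⁻¹' t)).toReal
        = ∑ l ∈ T, (μ (Λ ⁻¹' {l} ∩ Λ ⁻¹' t)).toReal := by
      calc (μ (Λ ⁻¹' t)).toReal = ∫ _ in Λ ⁻¹' t, (1:ℝ) ∂μ := hlhs.symm
        _ = ∫ x in Λ ⁻¹' t, (∑ l ∈ T,
              (Λ ⁻¹' {l}).indicator (fun _ => (1:ℝ)) x) ∂μ :=
            integral_congr_ae (Filter.Eventually.of_forall fun x => hone' x)
        _ = ∑ l ∈ T, ∫ x in Λ ⁻¹' t,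
              (Λ ⁻¹' {l}).indicator (fun _ => (1:ℝ)) x ∂μ := by
            rw [integral_finset_sum]
            intro l _
            exact ((integrable_const _).indicator (hΛlmeas l)).integrableOn
        _ = ∑ l ∈ T, (μ (Λ ⁻¹' {l} ∩ Λ ⁻¹' t)).toReal := by
            refine Finset.sum_congr rfl fun l _ => ?_
            rw [integral_indicator_const _ (hΛlmeas l),
              measureReal_def, Measure.restrict_apply (hΛlmeas l), smul_eq_mul, mul_one]
    rw [hmeast]
    refine Finset.sum_congr rfl fun l _ => ?_
    by_cases hlt : l ∈ t
    · have h1 : Λ ⁻¹' {l} ∩ Λ ⁻¹' t = Λ ⁻¹' {l} := by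
        apply Set.inter_eq_self_of_subset_left
        intro x hx
        have hxl : Λ x = l := Set.mem_singleton_iff.mp hx
        show Λ x ∈ t
        rw [hxl]; exact hlt
      have h2 : ∀ ℓ, A l ℓ ∩ Λ ⁻¹' t = A l ℓ := by
        intro ℓ
        apply Set.inter_eq_self_of_subset_left
        rintro x ⟨hx1, -⟩
        have hxl : Λ x = l := Set.mem_singleton_iff.mp hx1
        show Λ x ∈ t
        rw [hxl]; exact hlt
      rw [h1, ← key l]
      exact Finset.sum_congr rfl fun ℓ _ => by rw [h2 ℓ]
    · have h1 : Λ ⁻¹' {l} ∩ Λ ⁻¹' t = ∅ := by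
        ext x
        simp only [Set.mem_inter_iff, Set.mem_preimage, Set.mem_singleton_iff,
          Set.mem_empty_iff_false, iff_false]
        rintro ⟨rfl, hx2⟩
        exact hlt hx2
      have h2 : ∀ ℓ, A l ℓ ∩ Λ ⁻¹' t = ∅ := by
        intro ℓ
        ext x
        simp only [hAdef, Set.mem_inter_iff, Set.mem_preimage, Set.mem_singleton_iff,
          Set.mem_empty_iff_false, iff_false]
        rintro ⟨⟨rfl, -⟩, hx2⟩
        exact hlt hx2
      rw [h1]
      simp [h2]
  -- conclude: the conditional expectation is a.e. 1, hence has zero variance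
  have hce : μ[f|MeasurableSpace.comap Λ inferInstance] =ᵐ[μ]
      fun _ : Ω => (1:ℝ) := hone.symm
  have hmean : μ[μ[f|MeasurableSpace.comap Λ inferInstance]] = 1 := by
    rw [integral_congr_ae hce]
    simp
  have hev : evariance (μ[f|MeasurableSpace.comap Λ inferInstance]) μ = 0 := by
    rw [evariance_eq_zero_iff
      ((stronglyMeasurable_condExp.mono hm).measurable.aemeasurable)]
    rw [hmean]
    exact hce
  rw [variance, hev, ENNReal.toReal_zero]
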